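/- Let t_1, t_2, γ be real with t_2 ≠ 0 and t_1 + γ/2 ≠ 0. Set β_1 = −t_2/(t_1 + γ/2) and β_2 = −(t_1 − γ/2)/t_2, and assume |β_1| ≠ |β_2|, i.e. t_2² ≠ |t_1² − γ²/4|. Let r be real with min(|β_1|, |β_2|) < r < max(|β_1|, |β_2|), and define the 2×2 complex matrix M by M_{ab} = (1/(2πi)) ∮_{|β|=r} [ (H(β))^{−1} ]_{ab} · dβ/β, the contour being the counterclockwise circle of radius r centered at the origin. Then det M = 0 if and only if |t_1² − γ²/4| < t_2². Hence E = 0 is an isolated edge mode of the non-reciprocal SSH model exactly in the topological regime |t_1² − γ²/4| < t_2². -/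

import Mathlib

open Real Complex Matrix

/-- The Bloch matrix of the non-reciprocal SSH model:
`H(β) = [[0, t₁ + γ/2 + t₂ β⁻¹], [t₁ − γ/2 + t₂ β, 0]]`. -/
noncomputable def nhSSH (t₁ t₂ γ : ℝ) (β : ℂ) : Matrix (Fin 2) (Fin 2) ℂ :=
  !![0, (t₁ : ℂ) + (γ : ℂ) / 2 + (t₂ : ℂ) * β⁻¹;
     (t₁ : ℂ) - (γ : ℂ) / 2 + (t₂ : ℂ) * β, 0]


open Metric

lemma circle_inv_inside {w : ℂ} {r : ℝ} (hw : ‖w‖ < r) :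
    (∮ z in C(0, r), (z - w)⁻¹) = 2 * π * Complex.I :=
  circleIntegral.integral_sub_inv_of_mem_ball (by simpa [Metric.mem_ball, Complex.dist_eq] using hw)

lemma circle_inv_outside {w : ℂ} {r : ℝ} (h0 : 0 ≤ r) (hw : r < ‖w‖) :
    (∮ z in C(0, r), (z - w)⁻¹) = 0 := by
  have key : ∀ z ∈ Metric.closedBall (0:ℂ) r, DifferentiableAt ℂ (fun z => (z - w)⁻¹) z := by
    intro z hz
    have hzw : z ≠ w := by
      intro h
      rw [Metric.mem_closedBall, Complex.dist_eq, sub_zero, h] at hz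
      exact absurd hw (not_lt.2 hz)
    exact ((differentiableAt_id.sub (differentiableAt_const w)).inv (sub_ne_zero.2 hzw))
  exact circleIntegral_eq_zero_of_differentiable_on_off_countable h0 Set.countable_empty
    (fun z hz => (key z hz).continuousAt.continuousWithinAt)
    (fun z hz => key z (Metric.ball_subset_closedBall hz.1))

lemma circle_integrable_inv {w : ℂ} {r : ℝ} (h0 : 0 ≤ r) (hw : ‖w‖ ≠ r) :
    CircleIntegrable (fun z => (z - w)⁻¹) 0 r := by
  rw [circleIntegrable_sub_inv_iff]
  right
  simp [Metric.mem_sphere, Complex.dist_eq, _root_.abs_of_nonneg h0, hw]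

lemma abs_eq_r_ne_zero {β : ℂ} {r : ℝ} (hr0 : 0 < r) (hβ : β ∈ sphere (0:ℂ) r) : β ≠ 0 := by
  intro h0
  have hβr : ‖β‖ = r := by simpa [Complex.dist_eq] using hβ
  rw [h0] at hβr; simp at hβr; exact hr0.ne' hβr.symm

lemma eqOn01 {B t₂ β₂ : ℂ} {r : ℝ} (hr0 : 0 < r) (ht₂ : t₂ ≠ 0) (hB : B ≠ 0)
    (hβ₂ : β₂ = -B / t₂) (hb2 : ‖β₂‖ ≠ r) :
    Set.EqOn (fun β : ℂ => (B + t₂ * β)⁻¹ * β⁻¹)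
      (fun β : ℂ => B⁻¹ • ((β - 0)⁻¹ - (β - β₂)⁻¹)) (sphere (0:ℂ) r) := by
  intro β hβ
  have hβr : ‖β‖ = r := by simpa [Complex.dist_eq] using hβ
  have hβ0 : β ≠ 0 := abs_eq_r_ne_zero hr0 hβ
  have hββ₂ : β - β₂ ≠ 0 := sub_ne_zero.2 (fun he => hb2 (he ▸ hβr))
  have hβ₂0 : β₂ ≠ 0 := by rw [hβ₂]; exact div_ne_zero (neg_ne_zero.2 hB) ht₂
  have hB' : B = -t₂ * β₂ := by rw [hβ₂]; field_simp
  have hfac : B + t₂ * β = t₂ * (β - β₂) := by rw [hB']; ring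
  simp only [smul_eq_mul, sub_zero]
  rw [hfac, hB']
  field_simp
  ring

lemma int01_inside {B t₂ β₂ : ℂ} {r : ℝ} (hr0 : 0 < r) (ht₂ : t₂ ≠ 0)
    (hβ₂ : β₂ = -B / t₂) (h : ‖β₂‖ < r) :
    (∮ β in C(0, r), (B + t₂ * β)⁻¹ * β⁻¹) = 0 := by
  rcases eq_or_ne B 0 with hB | hB
  · have : Set.EqOn (fun β : ℂ => (B + t₂ * β)⁻¹ * β⁻¹)
        (fun β : ℂ => t₂⁻¹ • (β - 0) ^ (-2 : ℤ)) (sphere (0:ℂ) r) := by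
      intro β hβ
      have hβ0 : β ≠ 0 := abs_eq_r_ne_zero hr0 hβ
      have hz : (β : ℂ) ^ (-2 : ℤ) = β⁻¹ * β⁻¹ := by
        rw [_root_.zpow_neg, zpow_two, mul_inv]
      simp only [hB, zero_add, smul_eq_mul, sub_zero, hz]
      rw [mul_inv]; ring
    rw [circleIntegral.integral_congr hr0.le this, circleIntegral.integral_smul,
      circleIntegral.integral_sub_zpow_of_ne (by decide) 0 0 r, smul_zero]
  · rw [circleIntegral.integral_congr hr0.le (eqOn01 hr0 ht₂ hB hβ₂ h.ne),
      circleIntegral.integral_smul,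
      circleIntegral.integral_sub (circle_integrable_inv hr0.le (by simpa using hr0.ne))
        (circle_integrable_inv hr0.le h.ne),
      circle_inv_inside (by simpa using hr0), circle_inv_inside h, sub_self, smul_zero]

lemma int01_outside {B t₂ β₂ : ℂ} {r : ℝ} (hr0 : 0 < r) (ht₂ : t₂ ≠ 0)
    (hβ₂ : β₂ = -B / t₂) (h : r < ‖β₂‖) :
    (∮ β in C(0, r), (B + t₂ * β)⁻¹ * β⁻¹) = 2 * π * Complex.I * B⁻¹ := by
  have hB : B ≠ 0 := by
    intro hB; rw [hβ₂, hB] at h; simp at h; exact absurd (hr0.trans h) (lt_irrefl 0)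
  rw [circleIntegral.integral_congr hr0.le (eqOn01 hr0 ht₂ hB hβ₂ h.ne'),
    circleIntegral.integral_smul,
    circleIntegral.integral_sub (circle_integrable_inv hr0.le (by simpa using hr0.ne))
      (circle_integrable_inv hr0.le h.ne'),
    circle_inv_inside (by simpa using hr0), circle_inv_outside hr0.le h, sub_zero]
  simp [smul_eq_mul]; ring

lemma eqOn10 {A t₂ β₁ : ℂ} {r : ℝ} (hr0 : 0 < r) (hA : A ≠ 0)
    (hβ₁ : β₁ = -t₂ / A) (hb1 : ‖β₁‖ ≠ r) :
    Set.EqOn (fun β : ℂ => (A + t₂ * β⁻¹)⁻¹ * β⁻¹)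
      (fun β : ℂ => A⁻¹ • (β - β₁)⁻¹) (sphere (0:ℂ) r) := by
  intro β hβ
  have hβr : ‖β‖ = r := by simpa [Complex.dist_eq] using hβ
  have hβ0 : β ≠ 0 := abs_eq_r_ne_zero hr0 hβ
  have hββ₁ : β - β₁ ≠ 0 := sub_ne_zero.2 (fun he => hb1 (he ▸ hβr))
  have ht' : t₂ = -A * β₁ := by rw [hβ₁]; field_simp
  have hfac : A + t₂ * β⁻¹ = A * (β - β₁) * β⁻¹ := by
    rw [ht']; field_simp; ring
  simp only [smul_eq_mul]
  rw [hfac]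
  field_simp

lemma int10_inside {A t₂ β₁ : ℂ} {r : ℝ} (hr0 : 0 < r) (hA : A ≠ 0)
    (hβ₁ : β₁ = -t₂ / A) (h : ‖β₁‖ < r) :
    (∮ β in C(0, r), (A + t₂ * β⁻¹)⁻¹ * β⁻¹) = 2 * π * Complex.I * A⁻¹ := by
  rw [circleIntegral.integral_congr hr0.le (eqOn10 hr0 hA hβ₁ h.ne),
    circleIntegral.integral_smul, circle_inv_inside h]
  simp [smul_eq_mul]; ring

lemma int10_outside {A t₂ β₁ : ℂ} {r : ℝ} (hr0 : 0 < r) (hA : A ≠ 0)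
    (hβ₁ : β₁ = -t₂ / A) (h : r < ‖β₁‖) :
    (∮ β in C(0, r), (A + t₂ * β⁻¹)⁻¹ * β⁻¹) = 0 := by
  rw [circleIntegral.integral_congr hr0.le (eqOn10 hr0 hA hβ₁ h.ne'),
    circleIntegral.integral_smul, circle_inv_outside hr0.le h, smul_zero]

lemma nhSSH_inv_on_sphere (t₁ t₂ γ : ℝ) (ht₂ : t₂ ≠ 0) (hA : (t₁:ℂ) + (γ:ℂ)/2 ≠ 0)
    {β₁ β₂ : ℂ} (hβ₁ : β₁ = -(t₂:ℂ) / ((t₁:ℂ) + (γ:ℂ)/2))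
    (hβ₂ : β₂ = -((t₁:ℂ) - (γ:ℂ)/2) / (t₂:ℂ))
    {r : ℝ} (hr0 : 0 < r) (hb1 : ‖β₁‖ ≠ r) (hb2 : ‖β₂‖ ≠ r)
    {β : ℂ} (hβ : β ∈ Metric.sphere (0:ℂ) r) :
    (nhSSH t₁ t₂ γ β)⁻¹ =
      !![0, ((t₁:ℂ) - (γ:ℂ)/2 + (t₂:ℂ) * β)⁻¹;
         ((t₁:ℂ) + (γ:ℂ)/2 + (t₂:ℂ) * β⁻¹)⁻¹, 0] := by
  have ht₂' : (t₂:ℂ) ≠ 0 := Complex.ofReal_ne_zero.2 ht₂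
  have hβr : ‖β‖ = r := by simpa [Complex.dist_eq] using hβ
  have hβ0 : β ≠ 0 := abs_eq_r_ne_zero hr0 hβ
  have hββ₁ : β - β₁ ≠ 0 := sub_ne_zero.2 (fun he => hb1 (he ▸ hβr))
  have hββ₂ : β - β₂ ≠ 0 := sub_ne_zero.2 (fun he => hb2 (he ▸ hβr))
  have hA2 : (t₁:ℂ) * 2 + (γ:ℂ) ≠ 0 := fun h => hA (by linear_combination h / 2)
  have h1 : (t₁:ℂ) + (γ:ℂ)/2 + (t₂:ℂ) * β⁻¹ ≠ 0 := by
    have he : (t₁:ℂ) + (γ:ℂ)/2 + (t₂:ℂ) * β⁻¹ = ((t₁:ℂ) + (γ:ℂ)/2) * (β - β₁) * β⁻¹ := by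
      rw [hβ₁]; field_simp [hA2]; ring
    rw [he]; exact mul_ne_zero (mul_ne_zero hA hββ₁) (inv_ne_zero hβ0)
  have h2 : (t₁:ℂ) - (γ:ℂ)/2 + (t₂:ℂ) * β ≠ 0 := by
    have he : (t₁:ℂ) - (γ:ℂ)/2 + (t₂:ℂ) * β = (t₂:ℂ) * (β - β₂) := by
      rw [hβ₂]; field_simp; ring
    rw [he]; exact mul_ne_zero ht₂' hββ₂
  apply Matrix.inv_eq_right_inv
  simp only [nhSSH, Matrix.mul_fin_two]
  ext i j
  fin_cases i <;> fin_cases j <;>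
    simp [mul_inv_cancel₀ h1, mul_inv_cancel₀ h2]

/-- Zero edge mode of the non-reciprocal SSH model: with
`β₁ = −t₂/(t₁+γ/2)`, `β₂ = −(t₁−γ/2)/t₂` the `β`-solutions at `E = 0`, and
`min(|β₁|,|β₂|) < r < max(|β₁|,|β₂|)`, the edge matrix
`M_{ab} = (1/(2πi)) ∮_{|β|=r} [H(β)⁻¹]_{ab} dβ/β` satisfies `det M = 0` if and only if
`|t₁² − γ²/4| < t₂²`, i.e. exactly in the topological regime. -/
theorem nhSSH_zero_edge_mode (t₁ t₂ γ : ℝ)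
    (ht₂ : t₂ ≠ 0) (hγ : t₁ + γ / 2 ≠ 0)
    (β₁ β₂ : ℂ)
    (hβ₁ : β₁ = -(t₂ : ℂ) / ((t₁ : ℂ) + (γ : ℂ) / 2))
    (hβ₂ : β₂ = -((t₁ : ℂ) - (γ : ℂ) / 2) / (t₂ : ℂ))
    (hne : ‖β₁‖ ≠ ‖β₂‖)
    (r : ℝ) (hr₁ : min (‖β₁‖) (‖β₂‖) < r)
    (hr₂ : r < max (‖β₁‖) (‖β₂‖)) :
    (Matrix.of fun a b : Fin 2 =>
        (2 * (π : ℂ) * Complex.I)⁻¹ *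
          ∮ β in C(0, r), ((nhSSH t₁ t₂ γ β)⁻¹ a b) * β⁻¹).det = 0 ↔
      |t₁ ^ 2 - γ ^ 2 / 4| < t₂ ^ 2 := by
  have hA : (t₁:ℂ) + (γ:ℂ)/2 ≠ 0 := by
    have h := Complex.ofReal_ne_zero.2 hγ
    push_cast at h
    exact h
  have hπ : (2 * (π:ℂ) * Complex.I) ≠ 0 := by
    simp [Real.pi_ne_zero, Complex.I_ne_zero, Complex.ofReal_ne_zero]
  have hr0 : 0 < r :=
    lt_of_le_of_lt (le_min (norm_nonneg _) (norm_nonneg _)) hr₁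
  have hab1 : ‖β₁‖ = |t₂| / |t₁ + γ/2| := by
    rw [hβ₁, show -(t₂:ℂ) / ((t₁:ℂ) + (γ:ℂ)/2) = ((-t₂ / (t₁ + γ/2) : ℝ) : ℂ) by
      push_cast; ring, Complex.norm_real, Real.norm_eq_abs, abs_div, abs_neg]
  have hab2 : ‖β₂‖ = |t₁ - γ/2| / |t₂| := by
    rw [hβ₂, show -((t₁:ℂ) - (γ:ℂ)/2) / (t₂:ℂ) = ((-(t₁ - γ/2) / t₂ : ℝ) : ℂ) by
      push_cast; ring, Complex.norm_real, Real.norm_eq_abs, abs_div, abs_neg]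
  have hAp : 0 < |t₁ + γ/2| := abs_pos.2 hγ
  have htp : 0 < |t₂| := abs_pos.2 ht₂
  have hprod : |t₁^2 - γ^2/4| = |t₁ - γ/2| * |t₁ + γ/2| := by
    rw [← abs_mul]; congr 1; ring
  have ht2sq : t₂^2 = |t₂| * |t₂| := by rw [abs_mul_abs_self, sq]
  rw [Matrix.det_fin_two]
  simp only [Matrix.of_apply]
  rcases lt_or_gt_of_ne hne with hlt | hlt
  · -- |β₁| < |β₂| : trivial regime
    rw [min_eq_left hlt.le] at hr₁
    rw [max_eq_right hlt.le] at hr₂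
    have hinv := fun {β} (hβ : β ∈ Metric.sphere (0:ℂ) r) =>
      nhSSH_inv_on_sphere t₁ t₂ γ ht₂ hA hβ₁ hβ₂ hr0 hr₁.ne hr₂.ne' hβ
    have e00 : (∮ β in C(0, r), ((nhSSH t₁ t₂ γ β)⁻¹ 0 0) * β⁻¹) = 0 := by
      rw [circleIntegral.integral_congr (f := fun β : ℂ => ((nhSSH t₁ t₂ γ β)⁻¹ 0 0) * β⁻¹)
        hr0.le (g := fun _ => 0) (fun β hβ => by simp [hinv hβ])]
      simp [circleIntegral]
    have e11 : (∮ β in C(0, r), ((nhSSH t₁ t₂ γ β)⁻¹ 1 1) * β⁻¹) = 0 := by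
      rw [circleIntegral.integral_congr (f := fun β : ℂ => ((nhSSH t₁ t₂ γ β)⁻¹ 1 1) * β⁻¹)
        hr0.le (g := fun _ => 0) (fun β hβ => by simp [hinv hβ])]
      simp [circleIntegral]
    have e01 : (∮ β in C(0, r), ((nhSSH t₁ t₂ γ β)⁻¹ 0 1) * β⁻¹)
        = 2 * π * Complex.I * ((t₁:ℂ) - (γ:ℂ)/2)⁻¹ := by
      rw [circleIntegral.integral_congr (f := fun β : ℂ => ((nhSSH t₁ t₂ γ β)⁻¹ 0 1) * β⁻¹)
        hr0.le (g := fun β : ℂ => ((t₁:ℂ) - (γ:ℂ)/2 + (t₂:ℂ) * β)⁻¹ * β⁻¹)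
        (fun β hβ => by simp [hinv hβ])]
      exact int01_outside hr0 (Complex.ofReal_ne_zero.2 ht₂) hβ₂ hr₂
    have e10 : (∮ β in C(0, r), ((nhSSH t₁ t₂ γ β)⁻¹ 1 0) * β⁻¹)
        = 2 * π * Complex.I * ((t₁:ℂ) + (γ:ℂ)/2)⁻¹ := by
      rw [circleIntegral.integral_congr (f := fun β : ℂ => ((nhSSH t₁ t₂ γ β)⁻¹ 1 0) * β⁻¹)
        hr0.le (g := fun β : ℂ => ((t₁:ℂ) + (γ:ℂ)/2 + (t₂:ℂ) * β⁻¹)⁻¹ * β⁻¹)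
        (fun β hβ => by simp [hinv hβ])]
      exact int10_inside hr0 hA hβ₁ hr₁
    have hB : (t₁:ℂ) - (γ:ℂ)/2 ≠ 0 := by
      intro h
      have h0 : ‖β₂‖ = 0 := by rw [hβ₂, h]; simp
      rw [h0] at hr₂
      exact absurd (hr0.trans hr₂) (lt_irrefl 0)
    have hc : ∀ x : ℂ, (2 * (π:ℂ) * Complex.I)⁻¹ * (2 * (π:ℂ) * Complex.I * x) = x :=
      fun x => by rw [← mul_assoc, inv_mul_cancel₀ hπ, one_mul]
    rw [e00, e11, e01, e10]
    refine iff_of_false ?_ ?_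
    · rw [hc, hc]
      simp only [mul_zero, zero_mul, zero_sub, neg_eq_zero]
      exact mul_ne_zero (inv_ne_zero hB) (inv_ne_zero hA)
    · rw [not_lt, ht2sq, hprod]
      rw [hab1, hab2] at hlt
      exact ((div_lt_div_iff₀ hAp htp).1 hlt).le
  · -- |β₂| < |β₁| : topological regime
    rw [min_eq_right hlt.le] at hr₁
    rw [max_eq_left hlt.le] at hr₂
    have hinv := fun {β} (hβ : β ∈ Metric.sphere (0:ℂ) r) =>
      nhSSH_inv_on_sphere t₁ t₂ γ ht₂ hA hβ₁ hβ₂ hr0 hr₂.ne' hr₁.ne hβ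
    have e00 : (∮ β in C(0, r), ((nhSSH t₁ t₂ γ β)⁻¹ 0 0) * β⁻¹) = 0 := by
      rw [circleIntegral.integral_congr (f := fun β : ℂ => ((nhSSH t₁ t₂ γ β)⁻¹ 0 0) * β⁻¹)
        hr0.le (g := fun _ => 0) (fun β hβ => by simp [hinv hβ])]
      simp [circleIntegral]
    have e11 : (∮ β in C(0, r), ((nhSSH t₁ t₂ γ β)⁻¹ 1 1) * β⁻¹) = 0 := by
      rw [circleIntegral.integral_congr (f := fun β : ℂ => ((nhSSH t₁ t₂ γ β)⁻¹ 1 1) * β⁻¹)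
        hr0.le (g := fun _ => 0) (fun β hβ => by simp [hinv hβ])]
      simp [circleIntegral]
    have e01 : (∮ β in C(0, r), ((nhSSH t₁ t₂ γ β)⁻¹ 0 1) * β⁻¹) = 0 := by
      rw [circleIntegral.integral_congr (f := fun β : ℂ => ((nhSSH t₁ t₂ γ β)⁻¹ 0 1) * β⁻¹)
        hr0.le (g := fun β : ℂ => ((t₁:ℂ) - (γ:ℂ)/2 + (t₂:ℂ) * β)⁻¹ * β⁻¹)
        (fun β hβ => by simp [hinv hβ])]
      exact int01_inside hr0 (Complex.ofReal_ne_zero.2 ht₂) hβ₂ hr₁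
    have e10 : (∮ β in C(0, r), ((nhSSH t₁ t₂ γ β)⁻¹ 1 0) * β⁻¹) = 0 := by
      rw [circleIntegral.integral_congr (f := fun β : ℂ => ((nhSSH t₁ t₂ γ β)⁻¹ 1 0) * β⁻¹)
        hr0.le (g := fun β : ℂ => ((t₁:ℂ) + (γ:ℂ)/2 + (t₂:ℂ) * β⁻¹)⁻¹ * β⁻¹)
        (fun β hβ => by simp [hinv hβ])]
      exact int10_outside hr0 hA hβ₁ hr₂
    rw [e00, e11, e01, e10]
    refine iff_of_true (by ring) ?_
    rw [ht2sq, hprod]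
    rw [hab1, hab2] at hlt
    exact (div_lt_div_iff₀ htp hAp).1 hlt
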